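/- Let (Ω, μ) be a measure space, m ≥ 1, and for 1 ≤ j ≤ m let (M_j, ν_j) be a measure space and p_j : Ω → M_j a measurable map. Fix D ∈ ℝ and c_j > 0. Suppose that for all non-negative measurable functions f_j : M_j → [0,∞), ∫_Ω ∏_{j=1}^{m} f_j(p_j(x)) dμ(x) ≤ e^D ∏_{j=1}^{m} (∫_{M_j} f_j^{1/c_j} dν_j)^{c_j}. Then for every probability density f on Ω such that S(f) is finite and, for each j, the pushforward (p_j)_#(f dμ) is absolutely continuous with respect to ν_j with density f_{(p_j)} of finite entropy, the subadditivity of entropy holds: ∑_{j=1}^{m} c_j S(f_{(p_j)}) ≤ S(f) + D. -/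

import Mathlib

open MeasureTheory ENNReal

/-- **Brascamp–Lieb implies subadditivity of entropy** (Theorem 2.7(i) of the paper,
after Carlen–Cordero-Erausquin): if the Brascamp–Lieb inequality
`∫ ∏ f_j ∘ p_j dμ ≤ e^D ∏ (∫ f_j^{1/c_j} dν_j)^{c_j}` holds for all non-negative
measurable `f_j`, then every probability density `f` on `Ω` with finite entropy,
whose pushforwards under the `p_j` have densities `f_{(p_j)}` of finite entropy,
satisfies `∑ c_j S(f_{(p_j)}) ≤ S(f) + D`, where `S(g) = ∫ g ln g`. -/
theorem brascamp_lieb_implies_entropy_subadditivity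
    {Ω : Type*} [MeasurableSpace Ω] (μ : Measure Ω)
    (m : ℕ) (hm : 1 ≤ m)
    (M : Fin m → Type*) [∀ j, MeasurableSpace (M j)] (ν : ∀ j, Measure (M j))
    (p : ∀ j, Ω → M j) (hp : ∀ j, Measurable (p j))
    (D : ℝ) (c : Fin m → ℝ) (hc : ∀ j, 0 < c j)
    (hBL : ∀ g : ∀ j, M j → ℝ, (∀ j, Measurable (g j)) → (∀ j t, 0 ≤ g j t) →
      ∫⁻ x, ∏ j, ENNReal.ofReal (g j (p j x)) ∂μ ≤
        ENNReal.ofReal (Real.exp D) *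
          ∏ j, (∫⁻ t, ENNReal.ofReal (g j t ^ (1 / c j)) ∂ν j) ^ (c j))
    (f : Ω → ℝ) (hf : Measurable f) (hf0 : ∀ x, 0 ≤ f x)
    (hf1 : ∫⁻ x, ENNReal.ofReal (f x) ∂μ = 1)
    (hfent : Integrable (fun x => f x * Real.log (f x)) μ)
    (fp : ∀ j, M j → ℝ) (hfp : ∀ j, Measurable (fp j)) (hfp0 : ∀ j t, 0 ≤ fp j t)
    (hpush : ∀ j, (μ.withDensity fun x => ENNReal.ofReal (f x)).map (p j) =
      (ν j).withDensity fun t => ENNReal.ofReal (fp j t))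
    (hfpent : ∀ j, Integrable (fun t => fp j t * Real.log (fp j t)) (ν j)) :
    ∑ j, c j * ∫ t, fp j t * Real.log (fp j t) ∂ν j ≤
      (∫ x, f x * Real.log (f x) ∂μ) + D := by
  classical
  set P : Measure Ω := μ.withDensity fun x => ENNReal.ofReal (f x) with hP
  -- the density as an ℝ≥0-valued function, for `integral_withDensity_eq_integral_smul`
  have hPdens : P = μ.withDensity fun x => ((f x).toNNReal : ℝ≥0∞) := rfl
  have hfnn : Measurable fun x => (f x).toNNReal := hf.real_toNNReal
  -- step 1 : each fp j is a probability density
  have hfp1 : ∀ j, ∫⁻ t, ENNReal.ofReal (fp j t) ∂ν j = 1 := by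
    intro j
    have h1 : ((ν j).withDensity fun t => ENNReal.ofReal (fp j t)) Set.univ
        = ∫⁻ t, ENNReal.ofReal (fp j t) ∂ν j := by
      rw [withDensity_apply _ MeasurableSet.univ, setLIntegral_univ]
    rw [← h1, ← hpush j, Measure.map_apply (hp j) MeasurableSet.univ,
      Set.preimage_univ, hP, withDensity_apply _ MeasurableSet.univ, setLIntegral_univ, hf1]
  -- step 2 : change of variables for the entropy integrals
  have hwd : ∀ j, Integrable (fun t => Real.log (fp j t))
      ((ν j).withDensity fun t => ENNReal.ofReal (fp j t)) := by
    intro j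
    rw [integrable_withDensity_iff (hfp j).ennreal_ofReal
      (Filter.Eventually.of_forall fun t => ENNReal.ofReal_lt_top)]
    have : (fun t => Real.log (fp j t) * (ENNReal.ofReal (fp j t)).toReal)
        = fun t => fp j t * Real.log (fp j t) := by
      funext t; rw [ENNReal.toReal_ofReal (hfp0 j t), mul_comm]
    rw [this]; exact hfpent j
  have hint2 : ∀ j, Integrable (fun x => f x * Real.log (fp j (p j x))) μ := by
    intro j
    have h1 : Integrable (fun t => Real.log (fp j t)) (P.map (p j)) := by
      rw [hP, hpush j]; exact hwd j
    have h2 : Integrable (fun x => Real.log (fp j (p j x))) P :=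
      (integrable_map_measure ((hfp j).log.aestronglyMeasurable) (hp j).aemeasurable).mp h1
    rw [hP] at h2
    rw [integrable_withDensity_iff hf.ennreal_ofReal
      (Filter.Eventually.of_forall fun x => ENNReal.ofReal_lt_top)] at h2
    have : (fun x => Real.log (fp j (p j x)) * (ENNReal.ofReal (f x)).toReal)
        = fun x => f x * Real.log (fp j (p j x)) := by
      funext x; rw [ENNReal.toReal_ofReal (hf0 x), mul_comm]
    rwa [this] at h2
  have hcov : ∀ j, ∫ x, f x * Real.log (fp j (p j x)) ∂μ
      = ∫ t, fp j t * Real.log (fp j t) ∂ν j := by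
    intro j
    have e1 : ∫ t, Real.log (fp j t) ∂((ν j).withDensity fun t => ENNReal.ofReal (fp j t))
        = ∫ t, fp j t * Real.log (fp j t) ∂ν j := by
      have : ((ν j).withDensity fun t => ENNReal.ofReal (fp j t))
          = (ν j).withDensity fun t => ((fp j t).toNNReal : ℝ≥0∞) := rfl
      rw [this, integral_withDensity_eq_integral_smul (hfp j).real_toNNReal]
      congr 1; funext t
      rw [NNReal.smul_def, smul_eq_mul, Real.coe_toNNReal _ (hfp0 j t)]
    have e2 : ∫ t, Real.log (fp j t) ∂(P.map (p j))
        = ∫ x, Real.log (fp j (p j x)) ∂P :=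
      integral_map (hp j).aemeasurable ((hfp j).log.aestronglyMeasurable)
    have e3 : ∫ x, Real.log (fp j (p j x)) ∂P = ∫ x, f x * Real.log (fp j (p j x)) ∂μ := by
      rw [hPdens, integral_withDensity_eq_integral_smul hfnn]
      congr 1; funext x
      rw [NNReal.smul_def, smul_eq_mul, Real.coe_toNNReal _ (hf0 x)]
    calc ∫ x, f x * Real.log (fp j (p j x)) ∂μ
        = ∫ x, Real.log (fp j (p j x)) ∂P := e3.symm
      _ = ∫ t, Real.log (fp j t) ∂(P.map (p j)) := e2.symm
      _ = ∫ t, Real.log (fp j t) ∂((ν j).withDensity fun t => ENNReal.ofReal (fp j t)) := by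
          rw [hpush j]
      _ = ∫ t, fp j t * Real.log (fp j t) ∂ν j := e1
  -- step 3 : the Brascamp–Lieb bound on G = ∏ fp j (p j x) ^ c j
  set G : Ω → ℝ := fun x => ∏ j, fp j (p j x) ^ c j with hGdef
  have hGmeas : Measurable G :=
    Finset.measurable_prod _ fun j _ => ((hfp j).comp (hp j)).pow measurable_const
  have hG0 : ∀ x, 0 ≤ G x := fun x =>
    Finset.prod_nonneg fun j _ => Real.rpow_nonneg (hfp0 j (p j x)) _
  have hGbound : ∫⁻ x, ENNReal.ofReal (G x) ∂μ ≤ ENNReal.ofReal (Real.exp D) := by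
    have h := hBL (fun j t => fp j t ^ c j)
      (fun j => (hfp j).pow measurable_const)
      (fun j t => Real.rpow_nonneg (hfp0 j t) _)
    have hpow : ∀ j t, (fp j t ^ c j) ^ (1 / c j) = fp j t := by
      intro j t
      rw [← Real.rpow_mul (hfp0 j t), mul_one_div_cancel (hc j).ne', Real.rpow_one]
    simp only [hpow] at h
    calc ∫⁻ x, ENNReal.ofReal (G x) ∂μ
        = ∫⁻ x, ∏ j, ENNReal.ofReal (fp j (p j x) ^ c j) ∂μ := by
          congr 1; funext x
          exact ENNReal.ofReal_prod_of_nonneg fun j _ => Real.rpow_nonneg (hfp0 j (p j x)) _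
      _ ≤ ENNReal.ofReal (Real.exp D)
            * ∏ j, (∫⁻ t, ENNReal.ofReal (fp j t) ∂ν j) ^ c j := h
      _ = ENNReal.ofReal (Real.exp D) := by
          have h1 : ∀ j ∈ Finset.univ, (∫⁻ t, ENNReal.ofReal (fp j t) ∂ν j) ^ c j = 1 :=
            fun j _ => by rw [hfp1 j, ENNReal.one_rpow]
          rw [Finset.prod_congr rfl h1, Finset.prod_const_one, mul_one]
  have hGint : Integrable G μ := by
    refine ⟨hGmeas.aestronglyMeasurable, ?_⟩
    rw [hasFiniteIntegral_iff_ofReal (Filter.Eventually.of_forall hG0)]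
    exact lt_of_le_of_lt hGbound ENNReal.ofReal_lt_top
  have hfint : Integrable f μ := by
    refine ⟨hf.aestronglyMeasurable, ?_⟩
    rw [hasFiniteIntegral_iff_ofReal (Filter.Eventually.of_forall hf0)]
    rw [hf1]; exact ENNReal.one_lt_top
  have hfI : ∫ x, f x ∂μ = 1 := by
    rw [integral_eq_lintegral_of_nonneg_ae (Filter.Eventually.of_forall hf0)
      hf.aestronglyMeasurable, hf1, ENNReal.toReal_one]
  have hGI : ∫ x, G x ∂μ ≤ Real.exp D := by
    rw [integral_eq_lintegral_of_nonneg_ae (Filter.Eventually.of_forall hG0)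
      hGmeas.aestronglyMeasurable]
    calc (∫⁻ x, ENNReal.ofReal (G x) ∂μ).toReal
        ≤ (ENNReal.ofReal (Real.exp D)).toReal :=
          ENNReal.toReal_mono ENNReal.ofReal_ne_top hGbound
      _ = Real.exp D := ENNReal.toReal_ofReal (Real.exp_pos D).le
  -- step 4 : a.e. positivity of fp j ∘ p j where f > 0
  have hpos : ∀ j, ∀ᵐ x ∂μ, fp j (p j x) = 0 → f x = 0 := by
    intro j
    set S : Set (M j) := (fp j) ⁻¹' {0} with hSdef
    have hSmeas : MeasurableSet S := (hfp j) (measurableSet_singleton 0)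
    have hS0 : ((ν j).withDensity fun t => ENNReal.ofReal (fp j t)) S = 0 := by
      rw [withDensity_apply _ hSmeas]
      have : ∀ᵐ t ∂ν j, t ∈ S → ENNReal.ofReal (fp j t) = 0 :=
        Filter.Eventually.of_forall fun t ht => by
          simp only [hSdef, Set.mem_preimage, Set.mem_singleton_iff] at ht
          simp [ht]
      rw [setLIntegral_congr_fun_ae hSmeas this, lintegral_zero]
    have hpre : P ((p j) ⁻¹' S) = 0 := by
      rw [← Measure.map_apply (hp j) hSmeas, hP, hpush j]; exact hS0
    rw [hP, withDensity_apply _ ((hp j) hSmeas)] at hpre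
    have := (lintegral_eq_zero_iff hf.ennreal_ofReal).mp hpre
    rw [Filter.EventuallyEq, ae_restrict_iff' ((hp j) hSmeas)] at this
    filter_upwards [this] with x hx hx0
    have : ENNReal.ofReal (f x) = 0 := hx (by simpa [hSdef] using hx0)
    have := ENNReal.ofReal_eq_zero.mp this
    exact le_antisymm this (hf0 x)
  have hposAll : ∀ᵐ x ∂μ, ∀ j, fp j (p j x) = 0 → f x = 0 := ae_all_iff.mpr hpos
  -- step 5 : the pointwise inequality
  have main : ∀ᵐ x ∂μ, ∑ j, c j * (f x * Real.log (fp j (p j x)))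
      ≤ f x * Real.log (f x) + D * f x + (Real.exp (-D) * G x - f x) := by
    filter_upwards [hposAll] with x hx
    rcases eq_or_lt_of_le (hf0 x) with hfx | hfx
    · simp only [← hfx, mul_zero, zero_mul, Real.log_zero, Finset.sum_const_zero,
        zero_add, sub_zero]
      have := mul_nonneg (Real.exp_pos (-D)).le (hG0 x)
      linarith
    · have hfpj : ∀ j, 0 < fp j (p j x) := fun j =>
        lt_of_le_of_ne (hfp0 j (p j x)) fun h => by
          have := hx j h.symm; exact absurd this.symm hfx.ne
      have hGx : 0 < G x := Finset.prod_pos fun j _ => Real.rpow_pos_of_pos (hfpj j) _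
      have hlogG : Real.log (G x) = ∑ j, c j * Real.log (fp j (p j x)) := by
        rw [hGdef, Real.log_prod fun j _ => (Real.rpow_pos_of_pos (hfpj j) _).ne']
        exact Finset.sum_congr rfl fun j _ => Real.log_rpow (hfpj j) _
      set t : ℝ := Real.exp (-D) * G x / f x with htdef
      have ht : 0 < t := div_pos (mul_pos (Real.exp_pos _) hGx) hfx
      have hlt : Real.log t ≤ t - 1 := Real.log_le_sub_one_of_pos ht
      have hlogt : Real.log t = -D + Real.log (G x) - Real.log (f x) := by
        rw [htdef, Real.log_div (mul_pos (Real.exp_pos _) hGx).ne' hfx.ne',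
          Real.log_mul (Real.exp_pos _).ne' hGx.ne', Real.log_exp]
      have hft : f x * t = Real.exp (-D) * G x := by
        rw [htdef, mul_div_cancel₀ _ hfx.ne']
      have hmul : f x * Real.log t ≤ Real.exp (-D) * G x - f x := by
        calc f x * Real.log t ≤ f x * (t - 1) := by
              exact mul_le_mul_of_nonneg_left hlt hfx.le
          _ = Real.exp (-D) * G x - f x := by rw [mul_sub, hft]; ring
      have hsum : ∑ j, c j * (f x * Real.log (fp j (p j x))) = f x * Real.log (G x) := by
        rw [hlogG, Finset.mul_sum]
        exact Finset.sum_congr rfl fun j _ => by ring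
      have h2 : f x * Real.log (G x)
          = f x * Real.log t + D * f x + f x * Real.log (f x) := by
        rw [hlogt]; ring
      rw [hsum, h2]; linarith
  -- step 6 : integrate
  have intLHS : Integrable (fun x => ∑ j, c j * (f x * Real.log (fp j (p j x)))) μ :=
    integrable_finset_sum _ fun j _ => (hint2 j).const_mul _
  have intRHS : Integrable
      (fun x => f x * Real.log (f x) + D * f x + (Real.exp (-D) * G x - f x)) μ :=
    (hfent.add (hfint.const_mul D)).add ((hGint.const_mul _).sub hfint)
  have hmono := integral_mono_ae intLHS intRHS main
  rw [integral_finset_sum _ fun j _ => (hint2 j).const_mul _] at hmono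
  simp only [integral_const_mul] at hmono
  have e4 : ∫ x, (f x * Real.log (f x) + D * f x + (Real.exp (-D) * G x - f x)) ∂μ
      = (∫ x, (f x * Real.log (f x) + D * f x) ∂μ)
        + ∫ x, (Real.exp (-D) * G x - f x) ∂μ :=
    integral_add (hfent.add (hfint.const_mul D)) ((hGint.const_mul _).sub hfint)
  have e5 : ∫ x, (f x * Real.log (f x) + D * f x) ∂μ
      = (∫ x, f x * Real.log (f x) ∂μ) + D * ∫ x, f x ∂μ := by
    rw [integral_add hfent (hfint.const_mul D), integral_const_mul]
  have e6 : ∫ x, (Real.exp (-D) * G x - f x) ∂μ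
      = Real.exp (-D) * (∫ x, G x ∂μ) - ∫ x, f x ∂μ := by
    rw [integral_sub (hGint.const_mul _) hfint, integral_const_mul]
  rw [e4, e5, e6, hfI] at hmono
  have hsum_eq : ∑ j, c j * ∫ x, f x * Real.log (fp j (p j x)) ∂μ
      = ∑ j, c j * ∫ t, fp j t * Real.log (fp j t) ∂ν j :=
    Finset.sum_congr rfl fun j _ => by rw [hcov j]
  rw [hsum_eq] at hmono
  have hED : Real.exp (-D) * ∫ x, G x ∂μ ≤ 1 := by
    have := mul_le_mul_of_nonneg_left hGI (Real.exp_pos (-D)).le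
    rwa [← Real.exp_add, neg_add_cancel, Real.exp_zero] at this
  linarith
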